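/- arXiv:1809.09411 — 5 statements merged into one kernel-verified Lean document; each statement's English description precedes it below -/
import Mathlib

section
/- Let Ŵ and E be independent real random variables, exponentially distributed with means σ̂1² > 0 and σ_{e1}² > 0 respectively. Let P1, P2, N0, γ̄1, γ̄2 > 0 with λ_P := P2/P1 > γ̄2. Define the SINRs γ21 = Ŵ·P2/(Ŵ·P1 + E·(P1+P2) + N0) and γ1 = Ŵ·P1/(E·(P1+P2) + N0). Then the outage probability of the near user UE1 satisfies P{ γ21 < γ̄2 or γ1 < γ̄1 } = 1 − (1 + χ_M·(1+λ_P)·σ_{e1}²/σ̂1²)^{−1} · exp(−χ_M/ρ11), where ρ11 = P1·σ̂1²/N0, χ = γ̄2/(λ_P − γ̄2) and χ_M = max{χ, γ̄1}. -/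
open MeasureTheory ProbabilityTheory

/-- The law of an exponentially distributed random variable with mean `a`:
density `(1/a)·exp(−x/a)` with respect to Lebesgue measure on `[0, ∞)`. -/
noncomputable def expMean (a : ℝ) : Measure ℝ :=
  volume.withDensity fun x => ENNReal.ofReal (if 0 ≤ x then (1 / a) * Real.exp (-x / a) else 0)

open Real Set

lemma int_exp_Ioi {b : ℝ} (c : ℝ) (hb : 0 < b) :
    ∫ x in Set.Ioi c, Real.exp (-(b * x)) = Real.exp (-(b * c)) / b := by
  have := integral_comp_mul_left_Ioi (fun y => Real.exp (-y)) c hb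
  simp only [smul_eq_mul] at this
  rw [this, integral_exp_neg_Ioi]
  field_simp

lemma int_exp_Ici {b : ℝ} (c : ℝ) (hb : 0 < b) :
    ∫ x in Set.Ici c, Real.exp (-(b * x)) = Real.exp (-(b * c)) / b := by
  rw [integral_Ici_eq_integral_Ioi]; exact int_exp_Ioi c hb

lemma intOn_exp_Ici {b : ℝ} (c : ℝ) (hb : 0 < b) :
    IntegrableOn (fun x => Real.exp (-(b * x))) (Set.Ici c) := by
  rw [integrableOn_Ici_iff_integrableOn_Ioi]
  simpa using exp_neg_integrableOn_Ioi c hb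

lemma expMean_Ici {a : ℝ} (ha : 0 < a) {t : ℝ} (ht : 0 ≤ t) :
    expMean a (Set.Ici t) = ENNReal.ofReal (Real.exp (-(t / a))) := by
  rw [expMean, withDensity_apply _ measurableSet_Ici]
  have h1 : ∀ x ∈ Set.Ici t, ENNReal.ofReal (if 0 ≤ x then (1 / a) * Real.exp (-x / a) else 0)
      = ENNReal.ofReal ((1 / a) * Real.exp (-((1/a) * x))) := by
    intro x hx
    rw [if_pos (le_trans ht hx)]
    ring_nf
  rw [setLIntegral_congr_fun measurableSet_Ici h1]
  rw [← ofReal_integral_eq_lintegral_ofReal]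
  · rw [integral_const_mul, int_exp_Ici t (by positivity)]
    congr 1
    field_simp
  · exact ((intOn_exp_Ici t (by positivity)).const_mul _)
  · filter_upwards with x
    positivity

lemma expMean_neg {a : ℝ} : expMean a (Set.Iio 0) = 0 := by
  rw [expMean, withDensity_apply _ measurableSet_Iio]
  rw [setLIntegral_congr_fun measurableSet_Iio
    (fun x (hx : x < 0) => by rw [if_neg (not_le.2 hx)])]
  simp

lemma expMean_prob {a : ℝ} (ha : 0 < a) : IsProbabilityMeasure (expMean a) := by
  constructor
  have : (Set.univ : Set ℝ) = Set.Iio 0 ∪ Set.Ici 0 := by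
    ext x; simp [lt_or_ge]
  rw [this, measure_union (by simp [Set.disjoint_left]) measurableSet_Ici,
    expMean_neg, expMean_Ici ha le_rfl]
  simp

lemma prod_survival {σh σe α β : ℝ} (hσh : 0 < σh) (hσe : 0 < σe) (hα : 0 ≤ α) (hβ : 0 ≤ β) :
    ((expMean σh).prod (expMean σe)) {p : ℝ × ℝ | α * p.2 + β ≤ p.1}
      = ENNReal.ofReal ((1 + α * σe / σh)⁻¹ * Real.exp (-(β / σh))) := by
  have hk : 0 < 1/σe + α/σh := by positivity
  have hTm : MeasurableSet {p : ℝ × ℝ | α * p.2 + β ≤ p.1} :=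
    measurableSet_le (by fun_prop) (by fun_prop)
  haveI := expMean_prob hσh
  haveI := expMean_prob hσe
  rw [Measure.prod_apply_symm hTm]
  have hsec : ∀ y : ℝ, (fun x => (x, y)) ⁻¹' {p : ℝ × ℝ | α * p.2 + β ≤ p.1} =
      Set.Ici (α * y + β) := fun y => rfl
  have hae : ∀ᵐ y ∂(expMean σe), 0 ≤ y := by
    rw [ae_iff]
    have : {y : ℝ | ¬ 0 ≤ y} = Set.Iio 0 := by ext y; simp
    rw [this]; exact expMean_neg
  have hcongr : ∫⁻ y, expMean σh ((fun x => (x, y)) ⁻¹' {p : ℝ × ℝ | α * p.2 + β ≤ p.1})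
        ∂(expMean σe)
      = ∫⁻ y, ENNReal.ofReal (Real.exp (-((α * y + β) / σh))) ∂(expMean σe) := by
    apply lintegral_congr_ae
    filter_upwards [hae] with y hy
    rw [hsec, expMean_Ici hσh (by positivity)]
  have hdens : Measurable fun x : ℝ =>
      ENNReal.ofReal (if 0 ≤ x then (1/σe) * Real.exp (-x/σe) else 0) :=
    (Measurable.ite measurableSet_Ici (by fun_prop) measurable_const).ennreal_ofReal
  rw [hcongr, expMean,
    lintegral_withDensity_eq_lintegral_mul _ hdens (by fun_prop)]
  have hpt : ∀ x : ℝ, (ENNReal.ofReal (if 0 ≤ x then (1/σe) * Real.exp (-x/σe) else 0) *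
        ENNReal.ofReal (Real.exp (-((α * x + β) / σh))))
      = Set.indicator (Set.Ici 0)
        (fun x => ENNReal.ofReal (((1/σe) * Real.exp (-(β/σh))) * Real.exp (-((1/σe + α/σh) * x)))) x := by
    intro x
    by_cases hx : 0 ≤ x
    · rw [if_pos hx, Set.indicator_of_mem (Set.mem_Ici.2 hx), ← ENNReal.ofReal_mul (by positivity)]
      congr 1
      rw [mul_assoc, ← Real.exp_add, mul_assoc, ← Real.exp_add]
      congr 1
      field_simp
      ring
    · rw [if_neg hx, Set.indicator_of_notMem (by simpa using hx)]
      simp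
  simp only [Pi.mul_apply, hpt]
  rw [lintegral_indicator measurableSet_Ici _,
    ← ofReal_integral_eq_lintegral_ofReal ((intOn_exp_Ici 0 hk).const_mul _)
      (Filter.Eventually.of_forall fun x => by positivity)]
  rw [MeasureTheory.integral_const_mul, int_exp_Ici 0 hk]
  congr 1
  rw [mul_zero, neg_zero, Real.exp_zero]
  field_simp


lemma outage_iff {P1 P2 N0 γ1 γ2 lamP χ χM : ℝ}
    (hP1 : 0 < P1) (hN0 : 0 < N0) (hγ1 : 0 < γ1) (hγ2 : 0 < γ2)
    (hPg : γ2 * P1 < P2)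
    (hlamP : lamP = P2 / P1) (hχ : χ = γ2 / (lamP - γ2)) (hχM : χM = max χ γ1)
    (w e : ℝ) (hw : 0 ≤ w) (he : 0 ≤ e) :
    (¬ (w * P2 / (w * P1 + e * (P1 + P2) + N0) < γ2 ∨
        w * P1 / (e * (P1 + P2) + N0) < γ1)) ↔
      χM * (P1 + P2) / P1 * e + χM * N0 / P1 ≤ w := by
  have hP2 : 0 < P2 := lt_of_le_of_lt (by positivity) hPg
  rw [not_or, not_lt, not_lt]
  have hD' : 0 < e * (P1 + P2) + N0 := by nlinarith
  have hD : 0 < w * P1 + e * (P1 + P2) + N0 := by nlinarith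
  have hsub : 0 < P2 - γ2 * P1 := by linarith
  have hcpos : 0 < (e * (P1 + P2) + N0) / P1 := by positivity
  have hmax : χM * (P1 + P2) / P1 * e + χM * N0 / P1
      = max (χ * ((e * (P1 + P2) + N0) / P1)) (γ1 * ((e * (P1 + P2) + N0) / P1)) := by
    rw [← max_mul_of_nonneg _ _ hcpos.le, ← hχM]
    field_simp
  have hχc : χ * ((e * (P1 + P2) + N0) / P1) = γ2 * (e * (P1 + P2) + N0) / (P2 - γ2 * P1) := by
    rw [hχ, hlamP, show P2 / P1 - γ2 = (P2 - γ2 * P1) / P1 by field_simp]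
    field_simp
  rw [hmax, max_le_iff, hχc]
  constructor
  · rintro ⟨h2, h1'⟩
    rw [le_div_iff₀ hD] at h2
    rw [le_div_iff₀ hD'] at h1'
    constructor
    · rw [div_le_iff₀ hsub]; nlinarith
    · rw [← mul_div_assoc, div_le_iff₀ hP1]; nlinarith
  · rintro ⟨h2, h1'⟩
    rw [div_le_iff₀ hsub] at h2
    rw [← mul_div_assoc, div_le_iff₀ hP1] at h1'
    constructor
    · rw [le_div_iff₀ hD]; nlinarith
    · rw [le_div_iff₀ hD']; nlinarith

/-- Theorem 1 of the paper: outage probability of the near user UE1.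
`W = |ĥ1|²` and `E = |e1|²` are independent exponentials with means `σh1 = σ̂1²`
and `σe1 = σ_{e1}²`.  With `λ_P = P2/P1 > γ̄2`, `χ = γ̄2/(λ_P − γ̄2)`,
`χ_M = max{χ, γ̄1}` and `ρ11 = P1·σ̂1²/N0`,
`P{γ21 < γ̄2 ∨ γ1 < γ̄1} = 1 − (1 + χ_M·(1+λ_P)·σe1/σh1)⁻¹·exp(−χ_M/ρ11)`. -/
theorem stmt_2 {Ω : Type*} [MeasurableSpace Ω] (P : Measure Ω) [IsProbabilityMeasure P]
    (W E : Ω → ℝ) (σh1 σe1 P1 P2 N0 γ1 γ2 : ℝ)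
    (hσh1 : 0 < σh1) (hσe1 : 0 < σe1)
    (hP1 : 0 < P1) (hP2 : 0 < P2) (hN0 : 0 < N0) (hγ1 : 0 < γ1) (hγ2 : 0 < γ2)
    (hlam : γ2 < P2 / P1)
    (hind : IndepFun W E P)
    (hW : P.map W = expMean σh1) (hE : P.map E = expMean σe1)
    (lamP χ χM ρ11 : ℝ)
    (hlamP : lamP = P2 / P1) (hχ : χ = γ2 / (lamP - γ2))
    (hχM : χM = max χ γ1) (hρ11 : ρ11 = P1 * σh1 / N0) :
    (P {ω | W ω * P2 / (W ω * P1 + E ω * (P1 + P2) + N0) < γ2 ∨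
            W ω * P1 / (E ω * (P1 + P2) + N0) < γ1}).toReal =
      1 - (1 + χM * (1 + lamP) * σe1 / σh1)⁻¹ * Real.exp (-χM / ρ11) := by
  haveI := expMean_prob hσh1
  haveI := expMean_prob hσe1
  have hWm : AEMeasurable W P := aemeasurable_of_map_neZero (by rw [hW]; infer_instance)
  have hEm : AEMeasurable E P := aemeasurable_of_map_neZero (by rw [hE]; infer_instance)
  have hjoint : P.map (fun ω => (W ω, E ω)) = (expMean σh1).prod (expMean σe1) := by
    rw [← hW, ← hE]
    exact (indepFun_iff_map_prod_eq_prod_map_map hWm hEm).1 hind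
  set S : Set (ℝ × ℝ) := {p | p.1 * P2 / (p.1 * P1 + p.2 * (P1 + P2) + N0) < γ2 ∨
      p.1 * P1 / (p.2 * (P1 + P2) + N0) < γ1} with hS
  have hSm : MeasurableSet S := by
    have hm1 : Measurable fun p : ℝ × ℝ => p.1 * P2 / (p.1 * P1 + p.2 * (P1 + P2) + N0) := by
      fun_prop
    have hm2 : Measurable fun p : ℝ × ℝ => p.1 * P1 / (p.2 * (P1 + P2) + N0) := by fun_prop
    exact (measurableSet_lt hm1 measurable_const).union (measurableSet_lt hm2 measurable_const)
  have h1 : P {ω | W ω * P2 / (W ω * P1 + E ω * (P1 + P2) + N0) < γ2 ∨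
        W ω * P1 / (E ω * (P1 + P2) + N0) < γ1}
      = ((expMean σh1).prod (expMean σe1)) S := by
    rw [← hjoint, Measure.map_apply_of_aemeasurable (hWm.prodMk hEm) hSm]
    rfl
  -- positivity facts
  have hχpos : 0 < χ := by
    rw [hχ, hlamP]; exact div_pos hγ2 (by linarith)
  have hχMpos : 0 < χM := by rw [hχM]; exact lt_max_of_lt_right hγ1
  set α : ℝ := χM * (P1 + P2) / P1 with hα
  set β : ℝ := χM * N0 / P1 with hβ
  have hαpos : 0 < α := by positivity
  have hβpos : 0 < β := by positivity
  -- a.e. equality of the complement with the half-plane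
  have haq : ∀ᵐ p ∂((expMean σh1).prod (expMean σe1)), 0 ≤ p.1 ∧ 0 ≤ p.2 := by
    rw [ae_iff]
    have hnull : ((expMean σh1).prod (expMean σe1))
        ((Set.Iio 0 ×ˢ Set.univ) ∪ (Set.univ ×ˢ Set.Iio 0)) = 0 := by
      apply measure_union_null <;> rw [Measure.prod_prod] <;> simp [expMean_neg]
    apply measure_mono_null _ hnull
    intro p hp
    simp only [Set.mem_setOf_eq, not_and_or, not_le] at hp
    rcases hp with h | h
    · exact Or.inl (by simp [h])
    · exact Or.inr (by simp [h])
  have hPg : γ2 * P1 < P2 := (lt_div_iff₀ hP1).1 hlam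
  have hiff : ∀ p : ℝ × ℝ, 0 ≤ p.1 → 0 ≤ p.2 →
      (p ∈ Sᶜ ↔ p ∈ {q : ℝ × ℝ | α * q.2 + β ≤ q.1}) := by
    rintro ⟨w, e⟩ hw he
    simpa [hS, hα, hβ] using
      outage_iff hP1 hN0 hγ1 hγ2 hPg hlamP hχ hχM w e hw he
  have hcompl : ((expMean σh1).prod (expMean σe1)) Sᶜ
      = ((expMean σh1).prod (expMean σe1)) {q : ℝ × ℝ | α * q.2 + β ≤ q.1} := by
    apply measure_congr
    rw [Filter.eventuallyEq_set]
    filter_upwards [haq] with p hp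
    exact hiff p hp.1 hp.2
  have hval : ((expMean σh1).prod (expMean σe1)) Sᶜ
      = ENNReal.ofReal ((1 + χM * (1 + lamP) * σe1 / σh1)⁻¹ * Real.exp (-χM / ρ11)) := by
    rw [hcompl, prod_survival hσh1 hσe1 hαpos.le hβpos.le]
    congr 2
    · rw [hα, hlamP]; field_simp
    · rw [hβ, hρ11]; field_simp
  have hr0 : 0 ≤ (1 + χM * (1 + lamP) * σe1 / σh1)⁻¹ * Real.exp (-χM / ρ11) := by
    have : 0 < 1 + lamP := by rw [hlamP]; positivity
    positivity
  have hr1 : (1 + χM * (1 + lamP) * σe1 / σh1)⁻¹ * Real.exp (-χM / ρ11) ≤ 1 := by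
    have h1lam : 0 < 1 + lamP := by rw [hlamP]; positivity
    have hb : (1:ℝ) ≤ 1 + χM * (1 + lamP) * σe1 / σh1 := by
      have : 0 ≤ χM * (1 + lamP) * σe1 / σh1 := by positivity
      linarith
    have hρpos : 0 < ρ11 := by rw [hρ11]; positivity
    have hex : Real.exp (-χM / ρ11) ≤ 1 := by
      rw [Real.exp_le_one_iff, neg_div]
      simp only [Left.neg_nonpos_iff]
      positivity
    have hinv : (1 + χM * (1 + lamP) * σe1 / σh1)⁻¹ ≤ 1 := inv_le_one_of_one_le₀ hb
    have hinv0 : 0 ≤ (1 + χM * (1 + lamP) * σe1 / σh1)⁻¹ :=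
      inv_nonneg.2 (le_trans zero_le_one hb)
    nlinarith [Real.exp_nonneg (-χM / ρ11)]
  rw [h1, ← compl_compl S, prob_compl_eq_one_sub hSm.compl, hval,
    ENNReal.toReal_sub_of_le (ENNReal.ofReal_le_one.2 hr1) ENNReal.one_ne_top,
    ENNReal.toReal_one, ENNReal.toReal_ofReal hr0]
end

section
/- Let Ŵ and E be independent real random variables, exponentially distributed with means σ̂3² > 0 and σ_{e3}² > 0 respectively, and let P3, N0 > 0. Define Y = Ŵ·P3/(E·P3 + N0), ρ3 = P3·σ̂3²/N0, and κ = σ_{e3}²/σ̂3². Then the law of Y has density f_Y(y) = [ (1/ρ3)·(1 + κ·y)^{−1} + κ·(1 + κ·y)^{−2} ] · exp(−y/ρ3) with respect to Lebesgue measure on [0, ∞). -/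
open MeasureTheory ProbabilityTheory Set Real

lemma exp_integral_Ioi {b : ℝ} (hb : 0 < b) : ∫ x in Ioi (0:ℝ), Real.exp (-(b*x)) = 1/b := by
  have h := integral_Ioi_of_hasDerivAt_of_tendsto' (a := (0:ℝ))
    (f := fun x => -Real.exp (-(b*x))/b) (f' := fun x => Real.exp (-(b*x)))
    (fun x _ => by
      have : HasDerivAt (fun x : ℝ => -(b*x)) (-b) x := by
        have h := ((hasDerivAt_id x).const_mul b).neg
        simp only [mul_one] at h
        exact h
      have := ((this.exp).neg.div_const b)
      convert this using 1
      all_goals try rfl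
      field_simp)
    (by simpa [neg_mul] using (exp_neg_integrableOn_Ioi 0 hb))
    (by
      have hb' : Filter.Tendsto (fun x : ℝ => b*x) Filter.atTop Filter.atTop :=
        Filter.Tendsto.const_mul_atTop hb Filter.tendsto_id
      have : Filter.Tendsto (fun x : ℝ => Real.exp (-(b*x))) Filter.atTop (nhds 0) :=
        Real.tendsto_exp_neg_atTop_nhds_zero.comp hb'
      simpa using (this.neg.div_const b))
  rw [h]
  show (0:ℝ) - (-Real.exp (-(b*0))/b) = 1/b
  rw [mul_zero, neg_zero, Real.exp_zero]
  ring

lemma expMean_Iic {a : ℝ} (ha : 0 < a) {c : ℝ} (hc : 0 ≤ c) :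
    expMean a (Iic c) = ENNReal.ofReal (1 - Real.exp (-c / a)) := by
  rw [expMean, withDensity_apply _ measurableSet_Iic]
  have key : ∀ x : ℝ, ENNReal.ofReal (if 0 ≤ x then (1 / a) * Real.exp (-x / a) else 0)
      = (Ici (0:ℝ)).indicator (fun x => ENNReal.ofReal ((1 / a) * Real.exp (-x / a))) x := by
    intro x
    by_cases h : 0 ≤ x <;> simp [indicator, h]
  simp_rw [key]
  rw [lintegral_indicator measurableSet_Ici _, Measure.restrict_restrict measurableSet_Ici]
  have : Ici (0:ℝ) ∩ Iic c = Icc 0 c := by ext x; simp [and_comm]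
  rw [this]
  have hint : IntegrableOn (fun x => (1 / a) * Real.exp (-x / a)) (Icc 0 c) volume :=
    (Continuous.continuousOn (by continuity)).integrableOn_compact isCompact_Icc
  rw [← ofReal_integral_eq_lintegral_ofReal hint
    (Filter.Eventually.of_forall fun x => by positivity)]
  congr 1
  rw [integral_Icc_eq_integral_Ioc, ← intervalIntegral.integral_of_le hc]
  have : ∀ x ∈ uIcc (0:ℝ) c, HasDerivAt (fun t => -Real.exp (-t/a)) ((1/a) * Real.exp (-x/a)) x := by
    intro x _
    have h1 : HasDerivAt (fun t : ℝ => -t/a) (-1/a) x :=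
      (hasDerivAt_id x).neg.div_const a
    have := (h1.exp).neg
    convert this using 1
    all_goals try rfl
    ring
  rw [intervalIntegral.integral_eq_sub_of_hasDerivAt this
    ((Continuous.continuousOn (by continuity)).intervalIntegrable)]
  simp [Real.exp_zero]
  ring

lemma expMean_ae_nonneg (a : ℝ) : ∀ᵐ x ∂(expMean a), 0 ≤ x := by
  rw [ae_iff]
  have hs : {x : ℝ | ¬ 0 ≤ x} = Iio 0 := by ext x; simp [not_le]
  rw [hs, expMean, withDensity_apply _ measurableSet_Iio,
    setLIntegral_congr_fun measurableSet_Iio (fun x hx => by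
      rw [if_neg (not_le.2 (mem_Iio.1 hx)), ENNReal.ofReal_zero])]
  simp

lemma expMean_Iio_zero (a : ℝ) : expMean a (Iio 0) = 0 := by
  have h := expMean_ae_nonneg a
  rw [ae_iff] at h
  rw [show Iio (0:ℝ) = {x : ℝ | ¬ 0 ≤ x} from by ext x; simp [not_le]]
  exact h

lemma wd_if_Iic_neg (g : ℝ → ℝ) {y : ℝ} (hy : y < 0) :
    (volume.withDensity fun x => ENNReal.ofReal (if 0 ≤ x then g x else 0)) (Iic y) = 0 := by
  rw [withDensity_apply _ measurableSet_Iic]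
  rw [setLIntegral_congr_fun measurableSet_Iic
    (fun x hx => by
      rw [if_neg (by linarith [mem_Iic.1 hx] : ¬ (0:ℝ) ≤ x)])]
  simp

lemma rhs_Iic {ρ3 κ : ℝ} (hρ : 0 < ρ3) (hκ : 0 < κ) {y : ℝ} (hy : 0 ≤ y) :
    (volume.withDensity fun x => ENNReal.ofReal (if 0 ≤ x then
        ((1 / ρ3) * (1 + κ * x)⁻¹ + κ * ((1 + κ * x) ^ 2)⁻¹) * Real.exp (-x / ρ3) else 0)) (Iic y)
      = ENNReal.ofReal (1 - Real.exp (-y / ρ3) * (1 + κ * y)⁻¹) := by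
  set f : ℝ → ℝ := fun x => ((1 / ρ3) * (1 + κ * x)⁻¹ + κ * ((1 + κ * x) ^ 2)⁻¹) * Real.exp (-x / ρ3)
    with hf
  rw [withDensity_apply _ measurableSet_Iic]
  have key : ∀ x : ℝ, ENNReal.ofReal (if 0 ≤ x then f x else 0)
      = (Ici (0:ℝ)).indicator (fun x => ENNReal.ofReal (f x)) x := by
    intro x; by_cases h : 0 ≤ x <;> simp [indicator, h]
  change ∫⁻ x in Iic y, ENNReal.ofReal (if 0 ≤ x then f x else 0) = _
  simp_rw [key]
  rw [lintegral_indicator measurableSet_Ici _, Measure.restrict_restrict measurableSet_Ici]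
  have hIcc : Ici (0:ℝ) ∩ Iic y = Icc 0 y := by ext x; simp [and_comm]
  rw [hIcc]
  have hne : ∀ x ∈ Icc (0:ℝ) y, 1 + κ * x ≠ 0 := fun x hx => by nlinarith [hx.1]
  have hcont : ContinuousOn f (Icc (0:ℝ) y) := by
    apply ContinuousOn.mul
    · apply ContinuousOn.add
      · exact continuousOn_const.mul (ContinuousOn.inv₀ (by fun_prop) hne)
      · exact continuousOn_const.mul (ContinuousOn.inv₀ (by fun_prop)
          (fun x hx => pow_ne_zero _ (hne x hx)))
    · fun_prop
  have hint : IntegrableOn f (Icc 0 y) volume := hcont.integrableOn_compact isCompact_Icc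
  rw [← ofReal_integral_eq_lintegral_ofReal hint ?nn]
  case nn =>
    filter_upwards [ae_restrict_mem measurableSet_Icc] with x hx
    have h1 : 0 < 1 + κ * x := by nlinarith [hx.1]
    exact mul_nonneg (add_nonneg (mul_nonneg (by positivity) (inv_nonneg.2 h1.le))
      (mul_nonneg hκ.le (inv_nonneg.2 (by positivity)))) (Real.exp_nonneg _)
  congr 1
  rw [integral_Icc_eq_integral_Ioc, ← intervalIntegral.integral_of_le hy]
  have hderiv : ∀ x ∈ uIcc (0:ℝ) y,
      HasDerivAt (fun t => -(Real.exp (-t/ρ3) * (1 + κ * t)⁻¹)) (f x) x := by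
    intro x hx
    rw [uIcc_of_le hy] at hx
    have hin1 : HasDerivAt (fun t : ℝ => -t/ρ3) (-1/ρ3) x := (hasDerivAt_id x).neg.div_const ρ3
    have h1 := hin1.exp
    have h2 : HasDerivAt (fun t : ℝ => (1 + κ * t)⁻¹) (-κ / (1 + κ * x)^2) x := by
      have hin : HasDerivAt (fun t : ℝ => 1 + κ * t) κ x := by
        simpa using ((hasDerivAt_id x).const_mul κ).const_add 1
      exact hin.inv (hne x hx)
    have := (h1.mul h2).neg
    convert this using 1
    all_goals try rfl
    rw [hf]
    field_simp
    ring
  rw [intervalIntegral.integral_eq_sub_of_hasDerivAt hderiv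
    (by
      apply ContinuousOn.intervalIntegrable
      rwa [uIcc_of_le hy])]
  simp [Real.exp_zero]
  ring

lemma real_int_fun_eq {σh3 σe3 P3 N0 : ℝ} (hσh3 : 0 < σh3) (hσe3 : 0 < σe3) (hP3 : 0 < P3)
    (y : ℝ) (e : ℝ) :
    (1/σe3) * Real.exp (-e/σe3) * (1 - Real.exp (-(y*(e*P3+N0)/P3)/σh3))
      = (1/σe3) * Real.exp (-((1/σe3)*e))
        - ((1/σe3) * Real.exp (-(y*N0/(P3*σh3)))) * Real.exp (-((1/σe3 + y/σh3)*e)) := by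
  have h1 : -e/σe3 = -((1/σe3)*e) := by ring
  have h2 : (-(y*(e*P3+N0)/P3)/σh3) = -(y*N0/(P3*σh3)) + -((y/σh3)*e) := by
    field_simp
    ring
  have h4 : Real.exp (-((1/σe3 + y/σh3)*e))
      = Real.exp (-((1/σe3)*e)) * Real.exp (-((y/σh3)*e)) := by
    rw [← Real.exp_add]; ring_nf
  rw [h1, h2, Real.exp_add, h4]
  ring

lemma real_int_integrable {σh3 σe3 P3 N0 : ℝ} (hσh3 : 0 < σh3) (hσe3 : 0 < σe3) (hP3 : 0 < P3)
    {y : ℝ} (hy : 0 ≤ y) :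
    IntegrableOn (fun e => (1/σe3) * Real.exp (-e/σe3) * (1 - Real.exp (-(y*(e*P3+N0)/P3)/σh3)))
      (Ioi (0:ℝ)) volume := by
  have hb1 : 0 < 1/σe3 := by positivity
  have hb2 : 0 < 1/σe3 + y/σh3 := by positivity
  have hint1 : IntegrableOn (fun e => (1/σe3) * Real.exp (-((1/σe3)*e))) (Ioi (0:ℝ)) := by
    simpa only [neg_mul, IntegrableOn] using (exp_neg_integrableOn_Ioi 0 hb1).const_mul (1/σe3)
  have hint2 : IntegrableOn (fun e => ((1/σe3) * Real.exp (-(y*N0/(P3*σh3))))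
      * Real.exp (-((1/σe3 + y/σh3)*e))) (Ioi (0:ℝ)) := by
    simpa only [neg_mul, IntegrableOn] using
      (exp_neg_integrableOn_Ioi 0 hb2).const_mul ((1/σe3) * Real.exp (-(y*N0/(P3*σh3))))
  exact IntegrableOn.congr_fun (hint1.sub hint2)
    (fun e _ => (real_int_fun_eq hσh3 hσe3 hP3 y e).symm) measurableSet_Ioi

lemma real_int {σh3 σe3 P3 N0 : ℝ} (hσh3 : 0 < σh3) (hσe3 : 0 < σe3) (hP3 : 0 < P3)
    (hN0 : 0 < N0) {y : ℝ} (hy : 0 ≤ y) :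
    ∫ e in Ioi (0:ℝ), (1/σe3) * Real.exp (-e/σe3) * (1 - Real.exp (-(y*(e*P3+N0)/P3)/σh3))
      = 1 - Real.exp (-(y*N0/(P3*σh3))) * (1 + (σe3/σh3)*y)⁻¹ := by
  have hb1 : 0 < 1/σe3 := by positivity
  have hb2 : 0 < 1/σe3 + y/σh3 := by positivity
  set C := Real.exp (-(y*N0/(P3*σh3))) with hC
  have hint1 : IntegrableOn (fun e => (1/σe3) * Real.exp (-((1/σe3)*e))) (Ioi (0:ℝ)) := by
    simpa only [neg_mul, IntegrableOn] using (exp_neg_integrableOn_Ioi 0 hb1).const_mul (1/σe3)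
  have hint2 : IntegrableOn (fun e => ((1/σe3)*C) * Real.exp (-((1/σe3 + y/σh3)*e))) (Ioi (0:ℝ)) := by
    simpa only [neg_mul, IntegrableOn] using (exp_neg_integrableOn_Ioi 0 hb2).const_mul ((1/σe3)*C)
  simp_rw [real_int_fun_eq hσh3 hσe3 hP3 y]
  rw [integral_sub hint1 hint2, integral_const_mul, integral_const_mul,
    exp_integral_Ioi hb1, exp_integral_Ioi hb2]
  have h6 : 1 + (σe3/σh3)*y ≠ 0 := by positivity
  field_simp

/-- density formula (20): with `W = |ĥ3|²` and `E = |e3|²`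
independent exponentials of means `σh3 = σ̂3²`, `σe3 = σ_{e3}²`, the law of
`Y = W·P3/(E·P3 + N0)` has density
`f_Y(y) = [(1/ρ3)·(1 + κ·y)⁻¹ + κ·(1 + κ·y)⁻²]·exp(−y/ρ3)` with respect to
Lebesgue measure on `[0, ∞)`, where `ρ3 = P3·σ̂3²/N0` and `κ = σe3/σh3`. -/
theorem stmt_5 {Ω : Type*} [MeasurableSpace Ω] (P : Measure Ω) [IsProbabilityMeasure P]
    (W E : Ω → ℝ) (σh3 σe3 P3 N0 : ℝ)
    (hσh3 : 0 < σh3) (hσe3 : 0 < σe3) (hP3 : 0 < P3) (hN0 : 0 < N0)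
    (hind : IndepFun W E P)
    (hW : P.map W = expMean σh3) (hE : P.map E = expMean σe3)
    (ρ3 κ : ℝ) (hρ3 : ρ3 = P3 * σh3 / N0) (hκ : κ = σe3 / σh3) :
    P.map (fun ω => W ω * P3 / (E ω * P3 + N0)) =
      volume.withDensity fun y => ENNReal.ofReal (if 0 ≤ y then
        ((1 / ρ3) * (1 + κ * y)⁻¹ + κ * ((1 + κ * y) ^ 2)⁻¹) * Real.exp (-y / ρ3)
        else 0) := by
  have hρ3pos : 0 < ρ3 := by rw [hρ3]; positivity
  have hκpos : 0 < κ := by rw [hκ]; positivity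
  -- AEMeasurability of W and E
  have hne_exp : ∀ a : ℝ, 0 < a → expMean a ≠ 0 := by
    intro a ha h0
    have h2 : expMean a (Iic 1) = 0 := by rw [h0]; simp
    rw [expMean_Iic ha zero_le_one] at h2
    rw [ENNReal.ofReal_eq_zero] at h2
    have : Real.exp (-1/a) < 1 := by
      apply Real.exp_lt_one_iff.2
      have ha1 : 0 < 1/a := by positivity
      have ha2 : -1/a = -(1/a) := by ring
      linarith
    linarith
  have hWm : AEMeasurable W P := by
    by_contra h
    exact hne_exp σh3 hσh3 (by rw [← hW, Measure.map_of_not_aemeasurable h])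
  have hEm : AEMeasurable E P := by
    by_contra h
    exact hne_exp σe3 hσe3 (by rw [← hE, Measure.map_of_not_aemeasurable h])
  haveI hPh : IsProbabilityMeasure (expMean σh3) := hW ▸ Measure.isProbabilityMeasure_map hWm
  haveI hPe : IsProbabilityMeasure (expMean σe3) := hE ▸ Measure.isProbabilityMeasure_map hEm
  have hg : Measurable fun p : ℝ × ℝ => p.1 * P3 / (p.2 * P3 + N0) := by fun_prop
  have hpair : P.map (fun ω => (W ω, E ω)) = (expMean σh3).prod (expMean σe3) := by
    rw [← hW, ← hE]
    exact (indepFun_iff_map_prod_eq_prod_map_map hWm hEm).mp hind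
  have hYm : AEMeasurable (fun ω => W ω * P3 / (E ω * P3 + N0)) P :=
    (hWm.mul aemeasurable_const).div ((hEm.mul aemeasurable_const).add aemeasurable_const)
  have hYmap : P.map (fun ω => W ω * P3 / (E ω * P3 + N0))
      = ((expMean σh3).prod (expMean σe3)).map (fun p : ℝ × ℝ => p.1 * P3 / (p.2 * P3 + N0)) := by
    rw [← hpair, AEMeasurable.map_map_of_aemeasurable hg.aemeasurable (hWm.prodMk hEm)]
    rfl
  haveI : IsProbabilityMeasure (P.map (fun ω => W ω * P3 / (E ω * P3 + N0))) :=
    Measure.isProbabilityMeasure_map hYm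
  refine Measure.ext_of_Iic _ _ (fun y => ?_)
  have hsetm : MeasurableSet {p : ℝ × ℝ | p.1 * P3 / (p.2 * P3 + N0) ≤ y} :=
    measurableSet_le hg measurable_const
  rw [hYmap, Measure.map_apply hg measurableSet_Iic]
  have hpre : (fun p : ℝ × ℝ => p.1 * P3 / (p.2 * P3 + N0)) ⁻¹' Iic y
      = {p : ℝ × ℝ | p.1 * P3 / (p.2 * P3 + N0) ≤ y} := rfl
  rw [hpre, Measure.prod_apply_symm hsetm]
  rcases lt_or_ge y 0 with hy | hy
  · -- negative case: both sides are 0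
    rw [wd_if_Iic_neg _ hy]
    have hae : ∀ᵐ e ∂(expMean σe3),
        (expMean σh3) ((fun w => (w, e)) ⁻¹' {p : ℝ × ℝ | p.1 * P3 / (p.2 * P3 + N0) ≤ y}) = 0 := by
      filter_upwards [expMean_ae_nonneg σe3] with e he
      have hsub : ((fun w => (w, e)) ⁻¹' {p : ℝ × ℝ | p.1 * P3 / (p.2 * P3 + N0) ≤ y})
          ⊆ Iio (0:ℝ) := by
        intro w hw
        simp only [mem_preimage, mem_setOf_eq] at hw
        rw [mem_Iio]
        by_contra h
        push_neg at h
        have hd : 0 < e * P3 + N0 := by nlinarith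
        have : 0 ≤ w * P3 / (e * P3 + N0) := by positivity
        linarith
      exact measure_mono_null hsub (expMean_Iio_zero σh3)
    rw [lintegral_congr_ae hae]
    simp
  · -- nonnegative case
    rw [rhs_Iic hρ3pos hκpos hy]
    have hae : ∀ᵐ e ∂(expMean σe3),
        (expMean σh3) ((fun w => (w, e)) ⁻¹' {p : ℝ × ℝ | p.1 * P3 / (p.2 * P3 + N0) ≤ y})
          = ENNReal.ofReal (1 - Real.exp (-(y*(e*P3+N0)/P3)/σh3)) := by
      filter_upwards [expMean_ae_nonneg σe3] with e he
      have hd : 0 < e * P3 + N0 := by nlinarith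
      have hset : (fun w => (w, e)) ⁻¹' {p : ℝ × ℝ | p.1 * P3 / (p.2 * P3 + N0) ≤ y}
          = Iic (y * (e * P3 + N0) / P3) := by
        ext w
        simp only [mem_preimage, mem_setOf_eq, mem_Iic]
        rw [div_le_iff₀ hd, ← le_div_iff₀ hP3]
      rw [hset, expMean_Iic hσh3 (div_nonneg (mul_nonneg hy hd.le) hP3.le)]
    rw [lintegral_congr_ae hae]
    have hGm : Measurable fun e : ℝ => ENNReal.ofReal (1 - Real.exp (-(y*(e*P3+N0)/P3)/σh3)) := by
      apply Measurable.ennreal_ofReal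
      fun_prop
    have hdm : Measurable fun x : ℝ => ENNReal.ofReal (if 0 ≤ x then (1/σe3) * Real.exp (-x/σe3) else 0) := by
      apply Measurable.ennreal_ofReal
      apply Measurable.ite
      · exact measurableSet_Ici
      · fun_prop
      · exact measurable_const
    rw [expMean, lintegral_withDensity_eq_lintegral_mul volume hdm hGm]
    have key : ∀ e : ℝ,
        ((fun x : ℝ => ENNReal.ofReal (if 0 ≤ x then (1/σe3) * Real.exp (-x/σe3) else 0)) *
          (fun e : ℝ => ENNReal.ofReal (1 - Real.exp (-(y*(e*P3+N0)/P3)/σh3)))) e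
        = (Ici (0:ℝ)).indicator (fun e => ENNReal.ofReal
            ((1/σe3) * Real.exp (-e/σe3) * (1 - Real.exp (-(y*(e*P3+N0)/P3)/σh3)))) e := by
      intro e
      by_cases h : 0 ≤ e
      · rw [Pi.mul_apply, if_pos h, indicator_of_mem (mem_Ici.2 h),
          ENNReal.ofReal_mul (by positivity : (0:ℝ) ≤ 1/σe3 * Real.exp (-e/σe3))]
      · simp [Pi.mul_apply, if_neg h, indicator_of_notMem (fun hc => h (mem_Ici.1 hc))]
    simp_rw [key]
    rw [lintegral_indicator measurableSet_Ici _]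
    rw [setLIntegral_congr (Ioi_ae_eq_Ici (a := (0:ℝ))).symm]
    rw [← ofReal_integral_eq_lintegral_ofReal (real_int_integrable hσh3 hσe3 hP3 hy) ?nn2]
    case nn2 =>
      filter_upwards [ae_restrict_mem measurableSet_Ioi] with e he
      have hd : 0 < e * P3 + N0 := by nlinarith [mem_Ioi.1 he]
      have hc : 0 ≤ y * (e * P3 + N0) / P3 := div_nonneg (mul_nonneg hy hd.le) hP3.le
      have harg : -(y*(e*P3+N0)/P3)/σh3 ≤ 0 :=
        div_nonpos_of_nonpos_of_nonneg (neg_nonpos.2 hc) hσh3.le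
      have hexp : Real.exp (-(y*(e*P3+N0)/P3)/σh3) ≤ 1 :=
        (Real.exp_le_exp.2 harg).trans_eq Real.exp_zero
      exact mul_nonneg (by positivity) (by linarith)
    rw [real_int hσh3 hσe3 hP3 hN0 hy]
    have e1 : -(y*N0/(P3*σh3)) = -y/ρ3 := by rw [hρ3]; field_simp
    rw [e1, hκ]
end

section
/- Let Ŵ2 and Ŵ3 be independent real random variables, exponentially distributed with means σ̂2² > 0 and σ̂3² > 0 respectively. Let P1, P2, P3, γ̄2 > 0 with λ_P := P2/P1 > γ̄2, and let I_X̃ > 0, I_Ỹ > 0 be constants. Define X̃ = Ŵ2·P2/(Ŵ2·P1 + I_X̃) and Ỹ = Ŵ3·P3/I_Ỹ. Then P{ X̃ + Ỹ < γ̄2 } = 1 − exp( −I_X̃·χ/(P1·σ̂2²) ) − (I_X̃/(P1·σ̂2²)) · exp( I_Ỹ·(λ_P − γ̄2)/(P3·σ̂3²) ) · Θ(χ), where χ = γ̄2/(λ_P − γ̄2) and Θ(χ) = ∫₀^χ exp( −(I_X̃/(P1·σ̂2²))·u − (I_Ỹ·λ_P/(P3·σ̂3²))·(1/(1+u)) )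 du. -/
open MeasureTheory ProbabilityTheory Set


lemma integral_exp_div' (a : ℝ) (s t : ℝ) :
    ∫ x in s..t, (1/a) * Real.exp (-x/a) = Real.exp (-s/a) - Real.exp (-t/a) := by
  have hderiv : ∀ x ∈ Set.uIcc s t, HasDerivAt (fun x => -Real.exp (-x/a)) ((1/a) * Real.exp (-x/a)) x := by
    intro x _
    have h1 : HasDerivAt (fun x : ℝ => -x/a) (-1/a) x := by
      simpa using ((hasDerivAt_id x).neg.div_const a)
    have h2 := (h1.exp).neg
    exact h2.congr_deriv (by ring)
  have := intervalIntegral.integral_eq_sub_of_hasDerivAt hderiv ?_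
  · rw [this]; ring
  · apply Continuous.intervalIntegrable
    continuity

lemma expMean_density_measurable (a : ℝ) :
    Measurable fun x : ℝ => ENNReal.ofReal (if 0 ≤ x then (1 / a) * Real.exp (-x / a) else 0) := by
  apply ENNReal.measurable_ofReal.comp
  apply Measurable.ite measurableSet_Ici _ measurable_const
  fun_prop

lemma expMean_Iio (a : ℝ) (ha : 0 < a) (s : ℝ) :
    expMean a (Set.Iio s) = ENNReal.ofReal (1 - Real.exp (-s / a)) := by
  rw [expMean, withDensity_apply _ measurableSet_Iio]
  rcases le_or_gt s 0 with hs | hs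
  · have h0 : ∀ x ∈ Set.Iio s, ENNReal.ofReal (if 0 ≤ x then (1/a) * Real.exp (-x/a) else 0) = 0 := by
      intro x hx
      rw [if_neg (by simp only [Set.mem_Iio] at hx; linarith)]
      simp
    rw [setLIntegral_congr_fun measurableSet_Iio h0]
    have : Real.exp (-s/a) ≥ 1 := by
      rw [ge_iff_le, show (1:ℝ) = Real.exp 0 by simp]
      exact Real.exp_le_exp.mpr (div_nonneg (neg_nonneg.mpr hs) ha.le)
    simp only [lintegral_zero]
    exact (ENNReal.ofReal_eq_zero.mpr (by linarith)).symm
  · have hsplit : Set.Iio s = Set.Iio 0 ∪ Set.Ico 0 s := by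
      ext x; simp [Set.mem_Iio, Set.mem_Ico]; constructor
      · intro h; rcases lt_or_ge x 0 with h' | h'; exacts [Or.inl h', Or.inr ⟨h', h⟩]
      · rintro (h | ⟨_, h⟩) <;> linarith
    rw [hsplit, lintegral_union measurableSet_Ico
      ((Set.Iio_disjoint_Ici le_rfl).mono_right Set.Ico_subset_Ici_self)]
    have h0 : ∀ x ∈ Set.Iio (0:ℝ), ENNReal.ofReal (if 0 ≤ x then (1/a) * Real.exp (-x/a) else 0) = 0 := by
      intro x hx; rw [if_neg (by simpa using hx)]; simp
    rw [setLIntegral_congr_fun measurableSet_Iio h0]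
    simp only [lintegral_zero, zero_add]
    have h1 : ∀ x ∈ Set.Ico (0:ℝ) s, ENNReal.ofReal (if 0 ≤ x then (1/a) * Real.exp (-x/a) else 0)
        = ENNReal.ofReal ((1/a) * Real.exp (-x/a)) := by
      intro x hx; rw [if_pos hx.1]
    rw [setLIntegral_congr_fun measurableSet_Ico h1]
    rw [← ofReal_integral_eq_lintegral_ofReal
      ((Continuous.integrableOn_Icc (by fun_prop)).mono_set Set.Ico_subset_Icc_self)
      (Filter.Eventually.of_forall fun x => by positivity)]
    congr 1
    rw [setIntegral_congr_set Ico_ae_eq_Ioc, ← intervalIntegral.integral_of_le hs.le,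
      integral_exp_div' a 0 s]
    simp

instance (a : ℝ) : SFinite (expMean a) := by unfold expMean; infer_instance

/-- Lemma 2, eq. (14): approximate outage probability of the far
user UE2 in the relaying case.  With `W2 = |ĥ2|²`, `W3 = |ĥ3|²` independent
exponentials, constant interference-plus-noise terms `IX, IY > 0`,
`X̃ = W2·P2/(W2·P1 + IX)`, `Ỹ = W3·P3/IY`, `λ_P = P2/P1 > γ̄2` and
`χ = γ̄2/(λ_P − γ̄2)`:
`P{X̃ + Ỹ < γ̄2} = 1 − exp(−IX·χ/(P1·σ̂2²)) − (IX/(P1·σ̂2²))·exp(IY·(λ_P−γ̄2)/(P3·σ̂3²))·Θ(χ)`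
with `Θ(χ) = ∫₀^χ exp(−(IX/(P1·σ̂2²))·u − (IY·λ_P/(P3·σ̂3²))/(1+u)) du`. -/
theorem stmt_8 {Ω : Type*} [MeasurableSpace Ω] (P : Measure Ω) [IsProbabilityMeasure P]
    (W2 W3 : Ω → ℝ) (σh2 σh3 P1 P2 P3 IX IY γ2 : ℝ)
    (hσh2 : 0 < σh2) (hσh3 : 0 < σh3)
    (hP1 : 0 < P1) (hP2 : 0 < P2) (hP3 : 0 < P3) (hIX : 0 < IX) (hIY : 0 < IY)
    (hγ2 : 0 < γ2) (hlam : γ2 < P2 / P1)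
    (hind : IndepFun W2 W3 P)
    (hW2 : P.map W2 = expMean σh2) (hW3 : P.map W3 = expMean σh3)
    (lamP χ Θ : ℝ)
    (hlamP : lamP = P2 / P1) (hχ : χ = γ2 / (lamP - γ2))
    (hΘ : Θ = ∫ u in (0:ℝ)..χ,
        Real.exp (-(IX / (P1 * σh2)) * u - (IY * lamP / (P3 * σh3)) * (1 / (1 + u)))) :
    (P {ω | W2 ω * P2 / (W2 ω * P1 + IX) + W3 ω * P3 / IY < γ2}).toReal =
      1 - Real.exp (-(IX * χ) / (P1 * σh2)) -
        (IX / (P1 * σh2)) * Real.exp (IY * (lamP - γ2) / (P3 * σh3)) * Θ := by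
  -- basic positivity facts
  have hPden : 0 < P2 - γ2 * P1 := by
    have := (lt_div_iff₀ hP1).mp hlam
    linarith
  have hlamγ : 0 < lamP - γ2 := by
    rw [hlamP]; rwa [sub_pos]
  have hχpos : 0 < χ := by rw [hχ]; positivity
  set c : ℝ := IX * χ / P1 with hc
  have hcpos : 0 < c := by positivity
  have hcval : c = γ2 * IX / (P2 - γ2 * P1) := by
    have h' : P2 - P1 * γ2 ≠ 0 := by nlinarith
    rw [hc, hχ, hlamP, div_sub' hP1.ne', div_div_eq_mul_div]
    field_simp
  -- measurability of the random variables
  have hW2ne : expMean σh2 ≠ 0 := by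
    intro h
    have := expMean_Iio σh2 hσh2 1
    rw [h] at this
    simp only [Measure.coe_zero, Pi.zero_apply] at this
    have h1 : Real.exp (-1 / σh2) < 1 := by
      rw [show (1:ℝ) = Real.exp 0 by simp]
      exact Real.exp_lt_exp.mpr (div_neg_of_neg_of_pos (by norm_num) hσh2)
    rw [eq_comm, ENNReal.ofReal_eq_zero] at this
    linarith
  have haW2 : AEMeasurable W2 P := by
    by_contra h
    exact hW2ne (hW2 ▸ Measure.map_of_not_aemeasurable h)
  have hW3ne : expMean σh3 ≠ 0 := by
    intro h
    have := expMean_Iio σh3 hσh3 1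
    rw [h] at this
    simp only [Measure.coe_zero, Pi.zero_apply] at this
    have h1 : Real.exp (-1 / σh3) < 1 := by
      rw [show (1:ℝ) = Real.exp 0 by simp]
      exact Real.exp_lt_exp.mpr (div_neg_of_neg_of_pos (by norm_num) hσh3)
    rw [eq_comm, ENNReal.ofReal_eq_zero] at this
    linarith
  have haW3 : AEMeasurable W3 P := by
    by_contra h
    exact hW3ne (hW3 ▸ Measure.map_of_not_aemeasurable h)
  -- the event as a set in the plane
  set S : Set (ℝ × ℝ) := {p : ℝ × ℝ | p.1 * P2 / (p.1 * P1 + IX) + p.2 * P3 / IY < γ2} with hS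
  have hSmeas : MeasurableSet S := by
    apply measurableSet_lt _ measurable_const
    fun_prop
  have hmap : P.map (fun ω => (W2 ω, W3 ω)) = (expMean σh2).prod (expMean σh3) := by
    rw [← hW2, ← hW3]
    exact (indepFun_iff_map_prod_eq_prod_map_map haW2 haW3).mp hind
  have hPS : P {ω | W2 ω * P2 / (W2 ω * P1 + IX) + W3 ω * P3 / IY < γ2}
      = ((expMean σh2).prod (expMean σh3)) S := by
    rw [← hmap, Measure.map_apply_of_aemeasurable (haW2.prodMk haW3) hSmeas]
    rfl
  -- sections of S
  have hsect : ∀ x : ℝ, Prod.mk x ⁻¹' S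
      = Set.Iio ((γ2 - x * P2 / (x * P1 + IX)) * IY / P3) := by
    intro x
    ext y
    simp only [Set.mem_preimage, hS, Set.mem_setOf_eq, Set.mem_Iio]
    rw [← lt_sub_iff_add_lt', div_lt_iff₀ hIY, ← lt_div_iff₀ hP3]
  -- the CDF of the Y-part as a function of x
  set F : ℝ → ℝ := fun x =>
    1 - Real.exp (-((γ2 - x * P2 / (x * P1 + IX)) * IY / P3) / σh3) with hF
  have hFmeas : Measurable fun x => ENNReal.ofReal (F x) := by
    apply ENNReal.measurable_ofReal.comp
    fun_prop
  have step1 : ((expMean σh2).prod (expMean σh3)) S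
      = ∫⁻ x, ENNReal.ofReal (if 0 ≤ x then (1 / σh2) * Real.exp (-x / σh2) else 0)
          * ENNReal.ofReal (F x) := by
    rw [Measure.prod_apply hSmeas]
    have : ∀ x : ℝ, expMean σh3 (Prod.mk x ⁻¹' S) = ENNReal.ofReal (F x) := by
      intro x
      rw [hsect x, expMean_Iio σh3 hσh3]
    simp only [this]
    rw [expMean, lintegral_withDensity_eq_lintegral_mul _ (expMean_density_measurable σh2) hFmeas]
    rfl
  -- key monotonicity facts about F
  have hden : ∀ x : ℝ, 0 ≤ x → 0 < x * P1 + IX := by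
    intro x hx; nlinarith
  have hFneg : ∀ x : ℝ, c ≤ x → F x ≤ 0 := by
    intro x hx
    have hx0 : (0:ℝ) ≤ x := le_trans hcpos.le hx
    have h1 : γ2 - x * P2 / (x * P1 + IX) ≤ 0 := by
      rw [hcval, div_le_iff₀ hPden] at hx
      rw [sub_nonpos, le_div_iff₀ (hden x hx0)]
      nlinarith
    have : 0 ≤ -((γ2 - x * P2 / (x * P1 + IX)) * IY / P3) / σh3 := by
      apply div_nonneg _ hσh3.le
      rw [neg_nonneg]
      apply div_nonpos_of_nonpos_of_nonneg _ hP3.le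
      exact mul_nonpos_of_nonpos_of_nonneg h1 hIY.le
    have := Real.one_le_exp_iff.mpr this
    simp only [hF]
    linarith
  have hFpos : ∀ x : ℝ, 0 ≤ x → x < c → 0 < F x := by
    intro x hx0 hx
    have h1 : 0 < γ2 - x * P2 / (x * P1 + IX) := by
      rw [hcval, lt_div_iff₀ hPden] at hx
      rw [sub_pos, div_lt_iff₀ (hden x hx0)]
      nlinarith
    have : -((γ2 - x * P2 / (x * P1 + IX)) * IY / P3) / σh3 < 0 := by
      apply div_neg_of_neg_of_pos _ hσh3
      rw [neg_lt_zero]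
      positivity
    have := Real.exp_lt_one_iff.mpr this
    simp only [hF]
    linarith
  -- rewrite the integrand as an indicator
  set G : ℝ → ℝ := fun x => (1 / σh2) * Real.exp (-x / σh2) * F x with hG
  have step2 : ∀ x : ℝ,
      ENNReal.ofReal (if 0 ≤ x then (1 / σh2) * Real.exp (-x / σh2) else 0)
        * ENNReal.ofReal (F x)
      = ENNReal.ofReal ((Set.Ico 0 c).indicator G x) := by
    intro x
    rcases lt_or_ge x 0 with hx | hx
    · rw [if_neg (not_le.mpr hx), Set.indicator_of_notMem (by simp [Set.mem_Ico]; intro h; linarith)]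
      simp
    rcases lt_or_ge x c with hxc | hxc
    · rw [if_pos hx, Set.indicator_of_mem (Set.mem_Ico.mpr ⟨hx, hxc⟩), hG,
        ← ENNReal.ofReal_mul (by positivity)]
    · rw [Set.indicator_of_notMem (by simp [Set.mem_Ico]; intro h; linarith),
        ENNReal.ofReal_eq_zero.mpr (hFneg x hxc), mul_zero]
      simp
  -- integrability of the indicator function
  have hGcont : ContinuousOn G (Set.Icc 0 c) := by
    apply ContinuousOn.mul
    · fun_prop
    · apply ContinuousOn.sub continuousOn_const
      apply Real.continuous_exp.comp_continuousOn
      apply ContinuousOn.div_const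
      apply ContinuousOn.neg
      apply ContinuousOn.div_const
      apply ContinuousOn.mul _ continuousOn_const
      apply ContinuousOn.sub continuousOn_const
      apply ContinuousOn.div (by fun_prop) (by fun_prop)
      intro x hx
      exact (hden x hx.1).ne'
  have hGint : Integrable ((Set.Ico 0 c).indicator G) := by
    rw [integrable_indicator_iff measurableSet_Ico]
    exact ((hGcont.integrableOn_Icc).mono_set Set.Ico_subset_Icc_self)
  have hGnn : 0 ≤ᶠ[ae volume] (Set.Ico 0 c).indicator G := by
    apply Filter.Eventually.of_forall
    intro x
    apply Set.indicator_nonneg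
    intro y hy
    have := hFpos y hy.1 hy.2
    have h2 : 0 < (1 / σh2) * Real.exp (-y / σh2) := by positivity
    rw [hG]
    positivity
  have step3 : ((expMean σh2).prod (expMean σh3)) S
      = ENNReal.ofReal (∫ x, (Set.Ico 0 c).indicator G x) := by
    rw [step1]
    simp only [step2]
    rw [← ofReal_integral_eq_lintegral_ofReal hGint hGnn]
  -- compute the real integral
  have hIco : ∫ x, (Set.Ico 0 c).indicator G x = ∫ x in (0:ℝ)..c, G x := by
    rw [integral_indicator measurableSet_Ico,
      setIntegral_congr_set Ico_ae_eq_Ioc, intervalIntegral.integral_of_le hcpos.le]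
  -- split G's integral
  set E : ℝ → ℝ := fun x =>
    Real.exp (-((γ2 - x * P2 / (x * P1 + IX)) * IY / P3) / σh3) with hE
  have hEcont : ContinuousOn (fun x => (1 / σh2) * Real.exp (-x / σh2) * E x)
      (Set.uIcc 0 c) := by
    rw [Set.uIcc_of_le hcpos.le]
    apply ContinuousOn.mul (by fun_prop)
    apply Real.continuous_exp.comp_continuousOn
    apply ContinuousOn.div_const
    apply ContinuousOn.neg
    apply ContinuousOn.div_const
    apply ContinuousOn.mul _ continuousOn_const
    apply ContinuousOn.sub continuousOn_const
    apply ContinuousOn.div (by fun_prop) (by fun_prop)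
    intro x hx
    exact (hden x hx.1).ne'
  have hsplit : ∫ x in (0:ℝ)..c, G x
      = (∫ x in (0:ℝ)..c, (1 / σh2) * Real.exp (-x / σh2))
        - ∫ x in (0:ℝ)..c, (1 / σh2) * Real.exp (-x / σh2) * E x := by
    rw [← intervalIntegral.integral_sub]
    · apply intervalIntegral.integral_congr
      intro x _
      simp only [hG, hF, hE]
      ring
    · apply Continuous.intervalIntegrable; fun_prop
    · exact hEcont.intervalIntegrable
  have hfirst : ∫ x in (0:ℝ)..c, (1 / σh2) * Real.exp (-x / σh2)
      = 1 - Real.exp (-c / σh2) := by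
    rw [integral_exp_div']
    simp
  -- substitution in the second integral
  have hsub : ∫ x in (0:ℝ)..c, (1 / σh2) * Real.exp (-x / σh2) * E x
      = (IX / P1) * ∫ u in (0:ℝ)..χ, (1 / σh2) * Real.exp (-(u * (IX / P1)) / σh2)
          * E (u * (IX / P1)) := by
    have hne : IX / P1 ≠ 0 := by positivity
    have h := intervalIntegral.integral_comp_mul_right
      (fun x => (1 / σh2) * Real.exp (-x / σh2) * E x) hne (a := 0) (b := χ)
    rw [zero_mul] at h
    have hcc : χ * (IX / P1) = c := by rw [hc]; ring
    rw [hcc] at h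
    rw [h, smul_eq_mul, ← mul_assoc, mul_inv_cancel₀ hne, one_mul]
  -- pointwise identification of the substituted integrand
  have hpoint : ∀ u ∈ Set.uIcc (0:ℝ) χ,
      (1 / σh2) * Real.exp (-(u * (IX / P1)) / σh2) * E (u * (IX / P1))
      = (1 / σh2) * (Real.exp (IY * (lamP - γ2) / (P3 * σh3))
          * Real.exp (-(IX / (P1 * σh2)) * u - (IY * lamP / (P3 * σh3)) * (1 / (1 + u)))) := by
    intro u hu
    rw [Set.uIcc_of_le hχpos.le] at hu
    have hu0 : 0 ≤ u := hu.1
    have h1u : (0:ℝ) < 1 + u := by linarith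
    have hden2 : u * (IX / P1) * P1 + IX = IX * (1 + u) := by
      field_simp
      ring
    simp only [hE]
    rw [mul_assoc, ← Real.exp_add, ← Real.exp_add]
    congr 1
    rw [hden2, hlamP]
    field_simp
    ring
  have hsecond : ∫ u in (0:ℝ)..χ, (1 / σh2) * Real.exp (-(u * (IX / P1)) / σh2)
          * E (u * (IX / P1))
      = (1 / σh2) * (Real.exp (IY * (lamP - γ2) / (P3 * σh3)) * Θ) := by
    rw [intervalIntegral.integral_congr hpoint, hΘ,
      intervalIntegral.integral_const_mul, intervalIntegral.integral_const_mul]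
  -- final assembly
  have hval : ∫ x, (Set.Ico 0 c).indicator G x
      = 1 - Real.exp (-(IX * χ) / (P1 * σh2))
        - (IX / (P1 * σh2)) * Real.exp (IY * (lamP - γ2) / (P3 * σh3)) * Θ := by
    rw [hIco, hsplit, hfirst, hsub, hsecond]
    have : -c / σh2 = -(IX * χ) / (P1 * σh2) := by
      rw [hc]; field_simp
    rw [this]
    field_simp
  rw [hPS, step3, hval, ENNReal.toReal_ofReal]
  rw [← hval]
  exact integral_nonneg_of_ae hGnn
end

section
/- Let λ_P, γ̄1, γ̄2, σ_c², σ̂1² be positive reals with λ_P > γ̄2, and set χ = γ̄2/(λ_P − γ̄2) and χ_M = max{χ, γ̄1}. Define, for ρ > 0, f(ρ) = 1 − (1 + χ_M·(1+λ_P)·σ_c²/σ̂1²)^{−1}·exp(−χ_M/ρ). Then f(ρ) tends, as ρ → ∞, to the limit (1+λ_P)·χ_M·(σ_c²/σ̂1²) / (1 + (1+λ_P)·χ_M·(σ_c²/σ̂1²)); in particular the outage probability of the near user with constant channel-estimation-error variance σ_{e1}² = σ_c² approaches a strictly positive floor that is independent of the SNR and increasing in σ_c². -/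
open Filter

/-- Theorem 3, eq. (22): with constant channel-estimation-error
variance `σc² = σc`, the near-user outage probability
`f(ρ) = 1 − (1 + χ_M·(1+λ_P)·σc/σ̂1²)⁻¹·exp(−χ_M/ρ)` tends, as `ρ → ∞`, to the
floor `L(σc) = (1+λ_P)·χ_M·(σc/σ̂1²)/(1 + (1+λ_P)·χ_M·(σc/σ̂1²))`; moreover the
floor is strictly positive (independent of the SNR) and increasing in the error
variance. -/
theorem stmt_11 (lamP γ1 γ2 σc σh1 : ℝ)
    (hlamP : 0 < lamP) (hγ1 : 0 < γ1) (hγ2 : 0 < γ2) (hσc : 0 < σc) (hσh1 : 0 < σh1)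
    (hlam : γ2 < lamP)
    (χ χM : ℝ) (hχ : χ = γ2 / (lamP - γ2)) (hχM : χM = max χ γ1)
    (f : ℝ → ℝ) (L : ℝ → ℝ)
    (hf : ∀ ρ, f ρ = 1 - (1 + χM * (1 + lamP) * σc / σh1)⁻¹ * Real.exp (-χM / ρ))
    (hL : ∀ s, L s = (1 + lamP) * χM * (s / σh1) / (1 + (1 + lamP) * χM * (s / σh1))) :
    Tendsto f atTop (nhds (L σc)) ∧ 0 < L σc ∧
      ∀ s s' : ℝ, 0 < s → s < s' → L s < L s' := by
  have hχM0 : 0 < χM := hχM ▸ lt_of_lt_of_le hγ1 (le_max_right _ _)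
  set a : ℝ := (1 + lamP) * χM / σh1 with ha
  have ha0 : 0 < a := by positivity
  have hLs : ∀ s, L s = a * s / (1 + a * s) := by
    intro s; rw [hL s, ha]; ring_nf
  have key : ∀ s, 0 < s → 0 < 1 + a * s := by
    intro s hs; positivity
  refine ⟨?_, ?_, ?_⟩
  · -- limit
    have h1 : Tendsto (fun ρ : ℝ => -χM / ρ) atTop (nhds 0) := by
      simpa [neg_div, div_eq_mul_inv, neg_mul] using (tendsto_inv_atTop_zero (𝕜 := ℝ)).const_mul (-χM)
    have h2 : Tendsto (fun ρ : ℝ => Real.exp (-χM / ρ)) atTop (nhds 1) := by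
      simpa [Function.comp_def] using (Real.continuous_exp.tendsto 0).comp h1
    have h3 : Tendsto f atTop
        (nhds (1 - (1 + χM * (1 + lamP) * σc / σh1)⁻¹ * 1)) := by
      have hfe : f = fun ρ => 1 - (1 + χM * (1 + lamP) * σc / σh1)⁻¹ * Real.exp (-χM / ρ) :=
        funext hf
      rw [hfe]
      simpa using ((tendsto_const_nhds (x := (1 + χM * (1 + lamP) * σc / σh1)⁻¹)
          (f := atTop)).mul h2).const_sub 1
    convert h3 using 1
    rw [hLs]
    have haux : 1 + χM * (1 + lamP) * σc / σh1 = 1 + a * σc := by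
      simp only [ha]; ring
    have hpos := key σc hσc
    rw [haux]
    field_simp
    congr 1; ring
  · rw [hLs]; positivity
  · intro s s' hs hss'
    rw [hLs, hLs]
    have hs' : 0 < s' := hs.trans hss'
    rw [div_lt_div_iff₀ (key s hs) (key s' hs')]
    nlinarith [mul_pos ha0 hs, mul_pos ha0 hs', mul_lt_mul_of_pos_left hss' ha0]
end

section
/- Let λ_P, γ̄1, γ̄2, η, σ̂1² be positive reals with λ_P > γ̄2, and set χ = γ̄2/(λ_P − γ̄2) and χ_M = max{χ, γ̄1}. Define, for ρ > 0, g(ρ) = 1 − (1 + χ_M·(1+λ_P)·η/(ρ·σ̂1²))^{−1}·exp(−χ_M/ρ). Then ρ·g(ρ) tends, as ρ → ∞, to χ_M·( (1+λ_P)·η/σ̂1² + 1 ); in particular, with estimation-error variance decreasing inversely with SNR, the near user's outage probability decays like 1/ρ (diversity order one) with no error floor. -/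
open Filter

/-- Theorem 3, eq. (25): with channel-estimation-error variance
decreasing inversely with the SNR (`σ_{e1}² = η/ρ`), the near-user outage
probability `g(ρ) = 1 − (1 + χ_M·(1+λ_P)·η/(ρ·σ̂1²))⁻¹·exp(−χ_M/ρ)` satisfies
`ρ·g(ρ) → χ_M·((1+λ_P)·η/σ̂1² + 1)` as `ρ → ∞`; in particular it decays like
`1/ρ` (diversity order one) with no error floor. -/
theorem stmt_12 (lamP γ1 γ2 η σh1 : ℝ)
    (hlamP : 0 < lamP) (hγ1 : 0 < γ1) (hγ2 : 0 < γ2) (hη : 0 < η) (hσh1 : 0 < σh1)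
    (hlam : γ2 < lamP)
    (χ χM : ℝ) (hχ : χ = γ2 / (lamP - γ2)) (hχM : χM = max χ γ1)
    (g : ℝ → ℝ)
    (hg : ∀ ρ, g ρ = 1 - (1 + χM * (1 + lamP) * η / (ρ * σh1))⁻¹ * Real.exp (-χM / ρ)) :
    Tendsto (fun ρ => ρ * g ρ) atTop (nhds (χM * ((1 + lamP) * η / σh1 + 1))) ∧
      Tendsto g atTop (nhds 0) := by
  have hχMpos : 0 < χM := lt_of_lt_of_le hγ1 (hχM ▸ le_max_right χ γ1)
  set c : ℝ := χM * (1 + lamP) * η / σh1 with hc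
  have hcpos : 0 < c := by positivity
  have hinv : Tendsto (fun ρ : ℝ => ρ⁻¹) atTop (nhds 0) := tendsto_inv_atTop_zero
  have hcρ : Tendsto (fun ρ : ℝ => c / ρ) atTop (nhds 0) := by
    simpa [div_eq_mul_inv] using hinv.const_mul c
  have hχρ : Tendsto (fun ρ : ℝ => -χM / ρ) atTop (nhds 0) := by
    simpa [div_eq_mul_inv] using hinv.const_mul (-χM)
  have hexp : Tendsto (fun ρ : ℝ => Real.exp (-χM / ρ)) atTop (nhds 1) := by
    have := (Real.continuous_exp.tendsto 0).comp hχρ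
    simpa [Function.comp_def] using this
  -- slope limit of exp at 0
  have hslope : Tendsto (fun t : ℝ => (Real.exp t - 1) / t) (nhdsWithin 0 {(0:ℝ)}ᶜ)
      (nhds 1) := by
    have h := hasDerivAt_iff_tendsto_slope.mp (Real.hasDerivAt_exp 0)
    rw [Real.exp_zero] at h
    refine h.congr fun t => ?_
    simp [slope_def_field, Real.exp_zero]
  have hχρ' : Tendsto (fun ρ : ℝ => -χM / ρ) atTop (nhdsWithin 0 {(0:ℝ)}ᶜ) := by
    rw [tendsto_nhdsWithin_iff]
    refine ⟨hχρ, ?_⟩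
    filter_upwards [eventually_gt_atTop (0:ℝ)] with ρ hρ
    have : -χM / ρ < 0 := div_neg_of_neg_of_pos (by linarith) hρ
    exact ne_of_lt this
  have hkey : Tendsto (fun ρ : ℝ => χM * ((Real.exp (-χM / ρ) - 1) / (-χM / ρ)))
      atTop (nhds (χM * 1)) := (hslope.comp hχρ').const_mul χM
  have hkey' : Tendsto (fun ρ : ℝ => ρ * (1 - Real.exp (-χM / ρ))) atTop (nhds χM) := by
    refine (hkey.congr' ?_).mono_right ?_
    · filter_upwards [eventually_gt_atTop (0:ℝ)] with ρ hρ
      have hρ0 : ρ ≠ 0 := ne_of_gt hρ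
      have hχ0 : χM ≠ 0 := ne_of_gt hχMpos
      field_simp [hχ0]
      ring
    · rw [mul_one]
  have hnum : Tendsto (fun ρ : ℝ => c + ρ * (1 - Real.exp (-χM / ρ))) atTop
      (nhds (c + χM)) := tendsto_const_nhds.add hkey'
  have hden : Tendsto (fun ρ : ℝ => 1 + c / ρ) atTop (nhds 1) := by
    simpa using tendsto_const_nhds.add hcρ
  have hdiv : Tendsto (fun ρ : ℝ => (c + ρ * (1 - Real.exp (-χM / ρ))) / (1 + c / ρ))
      atTop (nhds ((c + χM) / 1)) := hnum.div hden one_ne_zero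
  have heq : (c + χM) / 1 = χM * ((1 + lamP) * η / σh1 + 1) := by
    rw [div_one, hc]; ring
  rw [heq] at hdiv
  constructor
  · refine hdiv.congr' ?_
    filter_upwards [eventually_gt_atTop (0:ℝ)] with ρ hρ
    have hρ0 : ρ ≠ 0 := ne_of_gt hρ
    have hcρpos : 0 < 1 + c / ρ := by positivity
    have hd0 : 1 + c / ρ ≠ 0 := ne_of_gt hcρpos
    rw [hg ρ]
    have hrw : χM * (1 + lamP) * η / (ρ * σh1) = c / ρ := by
      rw [hc]; field_simp
    rw [hrw]
    field_simp
    ring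
  · have hcoef : Tendsto (fun ρ : ℝ => (1 + χM * (1 + lamP) * η / (ρ * σh1))⁻¹)
        atTop (nhds 1) := by
      have : Tendsto (fun ρ : ℝ => 1 + χM * (1 + lamP) * η / (ρ * σh1)) atTop (nhds 1) := by
        have h2 : Tendsto (fun ρ : ℝ => χM * (1 + lamP) * η / (ρ * σh1)) atTop (nhds 0) := by
          have := hinv.const_mul (χM * (1 + lamP) * η / σh1)
          refine (this.congr ?_).mono_right (by simp)
          intro ρ; field_simp
        simpa using tendsto_const_nhds.add h2
      simpa using this.inv₀ one_ne_zero
    have : Tendsto (fun ρ : ℝ => 1 - (1 + χM * (1 + lamP) * η / (ρ * σh1))⁻¹ *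
        Real.exp (-χM / ρ)) atTop (nhds (1 - 1 * 1)) :=
      tendsto_const_nhds.sub (hcoef.mul hexp)
    refine Tendsto.congr (fun ρ => (hg ρ).symm) ?_
    simpa using this
end
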